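/- In U_q(sl3) with simple roots α, β, set γ = α+β, f_γ = f_β f_α − q f_α f_β, and for the shifted extremal projector π(s) of the sl2-triple (e_α, f_α, h_α), define \hat f_γ(s) = f_β f_α − f_α f_β [s]_q/[s+1]_q. Then π(s) f_γ = \hat f_γ(s) π(s+1) holds as an identity of operators on every highest weight module where coefficients are defined. -/

import Mathlib

set_option maxHeartbeats 1000000

open Finset

noncomputable section

/-- `(u - u⁻¹)/(q - q⁻¹)`; with `u = q^z` this is the q-number `[z]_q`. -/
def qNum (q u : ℂ) : ℂ := (u - u⁻¹) / (q - q⁻¹)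

/-- q-factorial `[k]_q!`. -/
def qFact (q : ℂ) (k : ℕ) : ℂ := ∏ i ∈ Finset.range k, qNum q (q ^ (i + 1))

/-- auxiliary coefficient function -/
def cf (q t y : ℂ) (k : ℕ) : ℂ :=
  (-1 : ℂ) ^ k * y ^ k / (qFact q k * ∏ i ∈ Finset.range k, qNum q (t * q ^ ((i : ℤ) + 1)))

section Aux

variable {V : Type*} [AddCommGroup V] [Module ℂ V]

lemma pow_qcomm (c : ℂ) (A B : Module.End ℂ V) (h : A * B = c • (B * A)) :
    ∀ m : ℕ, A ^ m * B = c ^ m • (B * A ^ m)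
  | 0 => by simp
  | (m + 1) => by
    rw [pow_succ, mul_assoc, h, mul_smul_comm, ← mul_assoc, pow_qcomm c A B h m,
      smul_mul_assoc, smul_smul, mul_assoc, ← pow_succ, ← pow_succ']

lemma pow_qcomm' (c : ℂ) (A B : Module.End ℂ V) (h : B * A = c • (A * B)) :
    ∀ m : ℕ, B * A ^ m = c ^ m • (A ^ m * B)
  | 0 => by simp
  | (m + 1) => by
    rw [pow_succ, ← mul_assoc, pow_qcomm' c A B h m, smul_mul_assoc, mul_assoc, h,
      mul_smul_comm, smul_smul, ← mul_assoc, ← pow_succ]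

end Aux

lemma cf_succ (q t y : ℂ) (k : ℕ) :
    cf q t y (k + 1) = cf q t y k * (-y) / (qNum q (q ^ (k + 1)) * qNum q (t * q ^ ((k : ℤ) + 1))) := by
  unfold cf qFact
  rw [prod_range_succ, prod_range_succ]
  ring

lemma cf_shift (q t y : ℂ) (k : ℕ) (hq0 : q ≠ 0)
    (hu : qNum q (t * q ^ ((k : ℤ) + 1)) ≠ 0)
    (hD : qFact q k ≠ 0)
    (hP : (∏ i ∈ range k, qNum q (t * q ^ ((i : ℤ) + 1))) ≠ 0) :
    cf q (t * q) y k = cf q t y k * qNum q (t * q) / qNum q (t * q ^ ((k : ℤ) + 1)) := by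
  have hPP : (∏ i ∈ range k, qNum q (t * q ^ ((i : ℤ) + 1))) * qNum q (t * q ^ ((k : ℤ) + 1))
      = qNum q (t * q) * ∏ i ∈ range k, qNum q (t * q * q ^ ((i : ℤ) + 1)) := by
    rw [← prod_range_succ, prod_range_succ', mul_comm]
    congr 1
    · norm_num
    · apply Finset.prod_congr rfl
      intro i _
      congr 1
      push_cast
      rw [zpow_add_one₀ hq0 ((i : ℤ) + 1)]
      ring
  have hP'nz : (∏ i ∈ range k, qNum q (t * q * q ^ ((i : ℤ) + 1))) ≠ 0 := by
    intro h0
    rw [h0, mul_zero] at hPP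
    exact (mul_ne_zero hP hu) hPP
  rw [eq_div_iff hu]
  unfold cf
  rw [div_mul_eq_mul_div, div_mul_eq_mul_div,
    div_eq_div_iff (mul_ne_zero hD hP'nz) (mul_ne_zero hD hP)]
  linear_combination ((-1 : ℂ) ^ k * y ^ k * qFact q k) * hPP

lemma chi_closed (q : ℂ) (hq0 : q ≠ 0) (hqq : q - q⁻¹ ≠ 0) (hq2 : q ^ 2 ≠ 1) (k : ℕ) :
    (∑ j ∈ range (k + 1), (q ^ 2) ^ j) = q ^ k * qNum q (q ^ (k + 1)) := by
  have h1 : q ^ 2 - 1 ≠ 0 := sub_ne_zero.mpr hq2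
  rw [geom_sum_eq hq2, qNum, ← mul_div_assoc, div_eq_div_iff h1 hqq]
  field_simp
  ring

lemma keyA (q t κ : ℂ) (hq0 : q ≠ 0) (ht : t ≠ 0) (hκ : κ ≠ 0)
    (hqq : q - q⁻¹ ≠ 0) (Q : ℂ) (hQ : Q ≠ 0)
    (A : ℂ)
    (hu : qNum q (t * (Q * q)) ≠ 0)
    (hd : qNum q (Q * q) ≠ 0)
    (hs2 : qNum q (t * q) ≠ 0) :
    A * Q
      + (A * (-(t * κ⁻¹)) / (qNum q (Q * q) * qNum q (t * (Q * q))))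
          * -((Q * qNum q (Q * q)) * (q * κ) * ((q⁻¹ - q)⁻¹ * Q))
    = (A * qNum q (t * q) / qNum q (t * (Q * q)))
        * ((q⁻¹ - q)⁻¹ * (q⁻¹ - qNum q t / qNum q (t * q))) := by
  have hkeyA : q⁻¹ * qNum q (t * q) - qNum q t = t⁻¹ * q⁻¹ := by
    simp only [qNum]
    rw [← mul_div_assoc, div_sub_div_same, div_eq_iff hqq]
    field_simp
    ring
  have esub : q⁻¹ - qNum q t / qNum q (t * q) = t⁻¹ * q⁻¹ / qNum q (t * q) := by
    rw [eq_div_iff hs2, sub_mul, div_mul_cancel₀ _ hs2]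
    exact hkeyA
  rw [esub, show (q⁻¹ - q)⁻¹ = -(q - q⁻¹)⁻¹ from by rw [← neg_sub q q⁻¹, inv_neg]]
  have hW : (q - q⁻¹)⁻¹ * (q - q⁻¹) = 1 := inv_mul_cancel₀ hqq
  generalize hWd : (q - q⁻¹)⁻¹ = W at hW ⊢
  have e1 : (A * (-(t * κ⁻¹)) / (qNum q (Q * q) * qNum q (t * (Q * q))))
        * -((Q * qNum q (Q * q)) * (q * κ) * (-W * Q))
      = -(A * ((t * q) * (W * (Q * Q))) / qNum q (t * (Q * q))) := by
    field_simp
  have e2 : (A * qNum q (t * q) / qNum q (t * (Q * q)))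
        * (-W * (t⁻¹ * q⁻¹ / qNum q (t * q)))
      = -(A * (W * (t⁻¹ * q⁻¹)) / qNum q (t * (Q * q))) := by
    field_simp
  rw [e1, e2]
  have e3 : A * Q = A * Q * qNum q (t * (Q * q)) / qNum q (t * (Q * q)) := by
    rw [mul_div_assoc, div_self hu, mul_one]
  rw [e3, ← neg_div, ← add_div, ← neg_div, div_left_inj' hu]
  subst hWd
  simp only [qNum]
  have hQc : Q * Q⁻¹ = 1 := mul_inv_cancel₀ hQ
  linear_combination (-(A * t⁻¹ * q⁻¹ * (q - q⁻¹)⁻¹)) * hQc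

lemma keyB (q t κ : ℂ) (hq0 : q ≠ 0) (ht : t ≠ 0) (hκ : κ ≠ 0)
    (hqq : q - q⁻¹ ≠ 0) (Q : ℂ) (hQ : Q ≠ 0)
    (A : ℂ)
    (hu : qNum q (t * (Q * q)) ≠ 0)
    (hd : qNum q (Q * q) ≠ 0)
    (hs2 : qNum q (t * q) ≠ 0) :
    (A * (-(t * κ⁻¹)) / (qNum q (Q * q) * qNum q (t * (Q * q))))
        * ((Q * qNum q (Q * q)) * (q * κ) * ((q⁻¹ - q)⁻¹ * Q⁻¹))
    = (A * qNum q (t * q) / qNum q (t * (Q * q)))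
        * -((q⁻¹ - q)⁻¹ * (q - qNum q t / qNum q (t * q))) := by
  have hkeyB : q * qNum q (t * q) - qNum q t = t * q := by
    simp only [qNum]
    rw [← mul_div_assoc, div_sub_div_same, div_eq_iff hqq]
    field_simp
    ring
  have esub : q - qNum q t / qNum q (t * q) = t * q / qNum q (t * q) := by
    rw [eq_div_iff hs2, sub_mul, div_mul_cancel₀ _ hs2]
    exact hkeyB
  rw [esub, show (q⁻¹ - q)⁻¹ = -(q - q⁻¹)⁻¹ from by rw [← neg_sub q q⁻¹, inv_neg]]
  generalize hWd : (q - q⁻¹)⁻¹ = W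
  field_simp

/-- in `U_q(sl3)` with simple roots `α, β` and `γ = α+β`,
`f_γ = f_β f_α - q f_α f_β`, `\hat f_γ(s) = f_β f_α - f_α f_β [s]_q/[s+1]_q`, the shifted
extremal projector `π(s)` of the `α`-sl2-triple satisfies `π(s) f_γ = \hat f_γ(s) π(s+1)`
on every highest weight module, evaluated on a weight vector `v` with
`K_α v = κ • v` on which `e_α` acts nilpotently (`t = q^s`; `f_γ v` has
`K_α`-eigenvalue `κ q^{-1}`). -/
theorem pi_fgamma_intertwining {V : Type*} [AddCommGroup V] [Module ℂ V]
    (q t κ : ℂ) (hq0 : q ≠ 0) (hq : ∀ n : ℕ, 0 < n → q ^ n ≠ 1) (ht : t ≠ 0) (hκ : κ ≠ 0)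
    (Ea Fa Fb Ka Kai : Module.End ℂ V)
    (hK : Ka * Kai = 1) (hKi : Kai * Ka = 1)
    (hKE : Ka * Ea = (q ^ 2) • (Ea * Ka)) (hKF : Ka * Fa = (q ^ 2)⁻¹ • (Fa * Ka))
    (hKFb : Ka * Fb = q • (Fb * Ka))
    (hEF : Ea * Fa - Fa * Ea = (q - q⁻¹)⁻¹ • (Ka - Kai))
    (hEFb : Ea * Fb = Fb * Ea)
    (hSerre1 : Fa * Fa * Fb - (q + q⁻¹) • (Fa * Fb * Fa) + Fb * Fa * Fa = 0)
    (hSerre2 : Fb * Fb * Fa - (q + q⁻¹) • (Fb * Fa * Fb) + Fa * Fb * Fb = 0)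
    (v : V) (hKv : Ka v = κ • v) (N : ℕ)
    (hnil : (Ea ^ (N + 1)) v = 0)
    (hnil' : (Ea ^ (N + 1)) ((Fb * Fa - q • (Fa * Fb)) v) = 0)
    (hden : ∀ i : ℕ, 1 ≤ i → i ≤ N + 1 → qNum q (t * q ^ (i : ℤ)) ≠ 0) :
    ∑ k ∈ range (N + 1),
        ((-1 : ℂ) ^ k * (t * (q * (κ * q⁻¹))⁻¹) ^ k /
            (qFact q k * ∏ i ∈ range k, qNum q (t * q ^ ((i : ℤ) + 1)))) •
          (Fa ^ k) ((Ea ^ k) ((Fb * Fa - q • (Fa * Fb)) v))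
      = (Fb * Fa - (qNum q t / qNum q (t * q)) • (Fa * Fb))
          (∑ k ∈ range (N + 1),
            ((-1 : ℂ) ^ k * (t * q * (q * κ)⁻¹) ^ k /
                (qFact q k * ∏ i ∈ range k, qNum q (t * q * q ^ ((i : ℤ) + 1)))) •
              (Fa ^ k) ((Ea ^ k) v)) := by
  -- basic scalar nonvanishing facts
  have hq2 : q ^ 2 ≠ 1 := hq 2 (by norm_num)
  have hqq : q - q⁻¹ ≠ 0 := by
    intro h0
    apply hq2
    have h1 : q = q⁻¹ := sub_eq_zero.mp h0
    calc q ^ 2 = q * q := sq q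
    _ = q * q⁻¹ := by rw [← h1]
    _ = 1 := mul_inv_cancel₀ hq0
  have hqq' : (q⁻¹ - q) ≠ 0 := fun h0 => hqq (by rw [← neg_sub] at h0; exact neg_eq_zero.mp h0)
  have hq21 : q * q - 1 ≠ 0 := by
    intro h0
    exact hq 2 (by norm_num) (by rw [sq]; exact sub_eq_zero.mp h0)
  have hqintnz : ∀ m : ℕ, qNum q (q ^ (m + 1)) ≠ 0 := by
    intro m
    unfold qNum
    apply div_ne_zero _ hqq
    intro h0
    apply hq (2 * (m + 1)) (by omega)
    have hp : (q : ℂ) ^ (m + 1) ≠ 0 := pow_ne_zero _ hq0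
    have h1 : q ^ (m + 1) = (q ^ (m + 1))⁻¹ := sub_eq_zero.mp h0
    calc q ^ (2 * (m + 1)) = q ^ (m + 1) * q ^ (m + 1) := by ring
    _ = q ^ (m + 1) * (q ^ (m + 1))⁻¹ := by nth_rewrite 2 [h1]; rfl
    _ = 1 := mul_inv_cancel₀ hp
  have hD : ∀ k : ℕ, qFact q k ≠ 0 := fun k =>
    Finset.prod_ne_zero_iff.mpr fun i _ => hqintnz i
  have hdenz : ∀ i : ℕ, i ≤ N → qNum q (t * q ^ ((i : ℤ) + 1)) ≠ 0 := by
    intro i hi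
    have := hden (i + 1) (by omega) (by omega)
    rwa [show (((i + 1 : ℕ)) : ℤ) = (i : ℤ) + 1 from by push_cast; ring] at this
  have hP : ∀ k : ℕ, k ≤ N + 1 → (∏ i ∈ range k, qNum q (t * q ^ ((i : ℤ) + 1))) ≠ 0 := by
    intro k hk
    apply Finset.prod_ne_zero_iff.mpr
    intro i hi
    exact hdenz i (by simp only [mem_range] at hi; omega)
  have hs2 : qNum q (t * q) ≠ 0 := by
    have := hden 1 le_rfl (by omega)
    rwa [show ((1 : ℕ) : ℤ) = (1 : ℤ) from rfl, zpow_one] at this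
  -- normalize the coefficients in the goal
  have hκq2 : t * (q * (κ * q⁻¹))⁻¹ = t * κ⁻¹ := by
    rw [show q * (κ * q⁻¹) = κ from by field_simp]
  have htq2 : t * q * (q * κ)⁻¹ = t * κ⁻¹ := by
    field_simp
  simp only [hκq2, htq2]
  have hcfL : ∀ k : ℕ, (-1 : ℂ) ^ k * (t * κ⁻¹) ^ k /
      (qFact q k * ∏ i ∈ range k, qNum q (t * q ^ ((i : ℤ) + 1))) = cf q t (t * κ⁻¹) k :=
    fun _ => rfl
  have hcfR : ∀ k : ℕ, (-1 : ℂ) ^ k * (t * κ⁻¹) ^ k /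
      (qFact q k * ∏ i ∈ range k, qNum q (t * q * q ^ ((i : ℤ) + 1))) = cf q (t * q) (t * κ⁻¹) k :=
    fun _ => rfl
  simp only [hcfL, hcfR]
  set G : Module.End ℂ V := Fb * Fa - q • (Fa * Fb) with hGdef
  set H : Module.End ℂ V := Fb * Fa - q⁻¹ • (Fa * Fb) with hHdef
  -- operator identities
  have hFaG : Fa * G = q • (G * Fa) := by
    have key : Fa * G - q • (G * Fa)
        = (-q) • (Fa * Fa * Fb - (q + q⁻¹) • (Fa * Fb * Fa) + Fb * Fa * Fa) := by
      rw [hGdef]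
      simp only [mul_sub, sub_mul, smul_sub, smul_add, mul_smul_comm, smul_mul_assoc, smul_smul,
        mul_assoc]
      match_scalars <;> field_simp <;> ring
    rw [hSerre1, smul_zero, sub_eq_zero] at key
    exact key
  have hFaH : Fa * H = q⁻¹ • (H * Fa) := by
    have key : Fa * H - q⁻¹ • (H * Fa)
        = (-q⁻¹) • (Fa * Fa * Fb - (q + q⁻¹) • (Fa * Fb * Fa) + Fb * Fa * Fa) := by
      rw [hHdef]
      simp only [mul_sub, sub_mul, smul_sub, smul_add, mul_smul_comm, smul_mul_assoc, smul_smul,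
        mul_assoc]
      match_scalars <;> field_simp <;> ring
    rw [hSerre1, smul_zero, sub_eq_zero] at key
    exact key
  have hEaG : Ea * G = G * Ea - Ka * Fb := by
    have hEF' : Ea * Fa = (q - q⁻¹)⁻¹ • (Ka - Kai) + Fa * Ea := by rw [← hEF]; abel
    have hEFb' : ∀ X : Module.End ℂ V, Ea * (Fb * X) = Fb * (Ea * X) := fun X => by
      rw [← mul_assoc, hEFb, mul_assoc]
    have hEFa' : ∀ X : Module.End ℂ V,
        Ea * (Fa * X) = (q - q⁻¹)⁻¹ • (Ka * X - Kai * X) + Fa * (Ea * X) := fun X => by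
      rw [← mul_assoc, hEF', add_mul, smul_mul_assoc, sub_mul, mul_assoc]
    have hFbKa : Fb * Ka = q⁻¹ • (Ka * Fb) := by
      rw [hKFb, smul_smul, inv_mul_cancel₀ hq0, one_smul]
    have hFbKai : Fb * Kai = q • (Kai * Fb) := by
      have h1 : Fb = q • (Kai * (Fb * Ka)) := by
        calc Fb = Kai * (Ka * Fb) := by rw [← mul_assoc, hKi, one_mul]
        _ = q • (Kai * (Fb * Ka)) := by rw [hKFb, mul_smul_comm]
      calc Fb * Kai = (q • (Kai * (Fb * Ka))) * Kai := by rw [← h1]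
      _ = q • (Kai * Fb) := by
          rw [smul_mul_assoc, mul_assoc, mul_assoc, hK, mul_one]
    rw [hGdef]
    simp only [mul_sub, sub_mul, smul_sub, smul_add, mul_smul_comm, smul_mul_assoc, smul_smul,
      mul_assoc, hEFb', hEFa', hEFb, hEF', hFbKa, hFbKai, mul_add, add_mul]
    match_scalars <;> field_simp <;> ring
  have hcomm : Commute Ea Fb := hEFb
  have hFbE : ∀ m : ℕ, Fb * Ea ^ m = Ea ^ m * Fb := fun m => (hcomm.symm.pow_right m).eq
  have hKaE : ∀ m : ℕ, Ka * Ea ^ m = ((q ^ 2) ^ m) • (Ea ^ m * Ka) :=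
    pow_qcomm' (q ^ 2) Ea Ka hKE
  have hFaGpow : ∀ m : ℕ, Fa ^ m * G = q ^ m • (G * Fa ^ m) := pow_qcomm q Fa G hFaG
  have hFaHpow : ∀ m : ℕ, Fa ^ m * H = (q⁻¹) ^ m • (H * Fa ^ m) := pow_qcomm q⁻¹ Fa H hFaH
  have hEaGpow : ∀ m : ℕ, Ea ^ (m + 1) * G
      = G * Ea ^ (m + 1) - (∑ j ∈ range (m + 1), (q ^ 2) ^ j) • (Ea ^ m * (Ka * Fb)) := by
    intro m
    induction m with
    | zero => simpa using hEaG
    | succ n ih =>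
      calc Ea ^ (n + 2) * G = Ea * (Ea ^ (n + 1) * G) := by rw [← mul_assoc, ← pow_succ']
      _ = Ea * (G * Ea ^ (n + 1))
          - (∑ j ∈ range (n + 1), (q ^ 2) ^ j) • (Ea * (Ea ^ n * (Ka * Fb))) := by
          rw [ih, mul_sub, mul_smul_comm]
      _ = G * Ea ^ (n + 2) - (Ka * Fb) * Ea ^ (n + 1)
          - (∑ j ∈ range (n + 1), (q ^ 2) ^ j) • (Ea ^ (n + 1) * (Ka * Fb)) := by
          rw [← mul_assoc Ea G, hEaG, sub_mul, mul_assoc G, ← pow_succ', ← mul_assoc Ea,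
            ← pow_succ']
      _ = G * Ea ^ (n + 2) - ((q ^ 2) ^ (n + 1)) • (Ea ^ (n + 1) * (Ka * Fb))
          - (∑ j ∈ range (n + 1), (q ^ 2) ^ j) • (Ea ^ (n + 1) * (Ka * Fb)) := by
          rw [mul_assoc Ka Fb, hFbE (n + 1), ← mul_assoc Ka, hKaE (n + 1), smul_mul_assoc,
            mul_assoc]
      _ = G * Ea ^ (n + 2)
          - (∑ j ∈ range (n + 2), (q ^ 2) ^ j) • (Ea ^ (n + 1) * (Ka * Fb)) := by
          rw [sum_range_succ (fun j => (q ^ 2) ^ j) (n + 1), add_smul]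
          abel
  -- applied identities
  have hkey1 : ∀ k : ℕ, (Ea ^ (k + 1)) (G v)
      = G ((Ea ^ (k + 1)) v) - ((∑ j ∈ range (k + 1), (q ^ 2) ^ j) * (q * κ)) • Fb ((Ea ^ k) v) := by
    intro k
    have h0 := DFunLike.congr_fun (hEaGpow k) v
    simp only [Module.End.mul_apply, LinearMap.sub_apply, LinearMap.smul_apply] at h0
    have h1 : Ka (Fb v) = (q * κ) • Fb v := by
      have h2 := DFunLike.congr_fun hKFb v
      simp only [Module.End.mul_apply, LinearMap.smul_apply] at h2
      rw [h2, hKv, map_smul, smul_smul]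
    have h3 : (Ea ^ k) (Fb v) = Fb ((Ea ^ k) v) := by
      have h4 := DFunLike.congr_fun (hFbE k) v
      simp only [Module.End.mul_apply] at h4
      exact h4.symm
    rw [h0, h1, map_smul, h3, smul_smul]
  have hFaFbop : ∀ k : ℕ, Fa ^ (k + 1) * Fb
      = ((q⁻¹ - q)⁻¹ * q ^ k) • (G * Fa ^ k) - ((q⁻¹ - q)⁻¹ * (q⁻¹) ^ k) • (H * Fa ^ k) := by
    intro k
    have hGH : G - H = (q⁻¹ - q) • (Fa * Fb) := by
      rw [hGdef, hHdef]
      module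
    have hFaFb1 : Fa * Fb = (q⁻¹ - q)⁻¹ • (G - H) := by
      rw [hGH, smul_smul, inv_mul_cancel₀ hqq', one_smul]
    calc Fa ^ (k + 1) * Fb = Fa ^ k * (Fa * Fb) := by rw [pow_succ, mul_assoc]
    _ = (q⁻¹ - q)⁻¹ • (Fa ^ k * G - Fa ^ k * H) := by
        rw [hFaFb1, mul_smul_comm, mul_sub]
    _ = ((q⁻¹ - q)⁻¹ * q ^ k) • (G * Fa ^ k) - ((q⁻¹ - q)⁻¹ * (q⁻¹) ^ k) • (H * Fa ^ k) := by
        rw [hFaGpow, hFaHpow, smul_sub, smul_smul, smul_smul]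
  have hkey2 : ∀ k : ℕ, (Fa ^ (k + 1)) ((Ea ^ (k + 1)) (G v))
      = (q ^ (k + 1)) • G ((Fa ^ (k + 1)) ((Ea ^ (k + 1)) v))
        + (-((∑ j ∈ range (k + 1), (q ^ 2) ^ j) * (q * κ) * ((q⁻¹ - q)⁻¹ * q ^ k)))
            • G ((Fa ^ k) ((Ea ^ k) v))
        + ((∑ j ∈ range (k + 1), (q ^ 2) ^ j) * (q * κ) * ((q⁻¹ - q)⁻¹ * (q⁻¹) ^ k))
            • H ((Fa ^ k) ((Ea ^ k) v)) := by
    intro k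
    rw [hkey1 k, map_sub, map_smul]
    have hGa : (Fa ^ (k + 1)) (G ((Ea ^ (k + 1)) v))
        = (q ^ (k + 1)) • G ((Fa ^ (k + 1)) ((Ea ^ (k + 1)) v)) := by
      have h0 := DFunLike.congr_fun (hFaGpow (k + 1)) ((Ea ^ (k + 1)) v)
      simpa only [Module.End.mul_apply, LinearMap.smul_apply] using h0
    have hFba : (Fa ^ (k + 1)) (Fb ((Ea ^ k) v))
        = ((q⁻¹ - q)⁻¹ * q ^ k) • G ((Fa ^ k) ((Ea ^ k) v))
          - ((q⁻¹ - q)⁻¹ * (q⁻¹) ^ k) • H ((Fa ^ k) ((Ea ^ k) v)) := by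
      have h0 := DFunLike.congr_fun (hFaFbop k) ((Ea ^ k) v)
      simpa only [Module.End.mul_apply, LinearMap.sub_apply, LinearMap.smul_apply] using h0
    rw [hGa, hFba]
    module
  -- scalar identities
  have sA : ∀ k : ℕ, k ≤ N →
      cf q t (t * κ⁻¹) k * q ^ k
        + cf q t (t * κ⁻¹) (k + 1)
            * -((∑ j ∈ range (k + 1), (q ^ 2) ^ j) * (q * κ) * ((q⁻¹ - q)⁻¹ * q ^ k))
      = cf q (t * q) (t * κ⁻¹) k
          * ((q⁻¹ - q)⁻¹ * (q⁻¹ - qNum q t / qNum q (t * q))) := by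
    intro k hkN
    have hu0 : qNum q (t * q ^ ((k : ℤ) + 1)) ≠ 0 := hdenz k hkN
    rw [cf_succ, cf_shift q t (t * κ⁻¹) k hq0 hu0 (hD k) (hP k (by omega)),
      chi_closed q hq0 hqq hq2 k]
    have hzp : (q : ℂ) ^ ((k : ℤ) + 1) = q ^ k * q := by
      rw [zpow_add_one₀ hq0, zpow_natCast]
    rw [hzp] at hu0 ⊢
    rw [pow_succ]
    have hd0 : qNum q (q ^ k * q) ≠ 0 := by rw [← pow_succ]; exact hqintnz k
    exact keyA q t κ hq0 ht hκ hqq (q ^ k) (pow_ne_zero k hq0) (cf q t (t * κ⁻¹) k) hu0 hd0 hs2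
  have sB : ∀ k : ℕ, k ≤ N →
      cf q t (t * κ⁻¹) (k + 1)
          * ((∑ j ∈ range (k + 1), (q ^ 2) ^ j) * (q * κ) * ((q⁻¹ - q)⁻¹ * (q⁻¹) ^ k))
      = cf q (t * q) (t * κ⁻¹) k
          * -((q⁻¹ - q)⁻¹ * (q - qNum q t / qNum q (t * q))) := by
    intro k hkN
    have hu0 : qNum q (t * q ^ ((k : ℤ) + 1)) ≠ 0 := hdenz k hkN
    rw [cf_succ, cf_shift q t (t * κ⁻¹) k hq0 hu0 (hD k) (hP k (by omega)),
      chi_closed q hq0 hqq hq2 k]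
    have hzp : (q : ℂ) ^ ((k : ℤ) + 1) = q ^ k * q := by
      rw [zpow_add_one₀ hq0, zpow_natCast]
    rw [hzp] at hu0 ⊢
    rw [pow_succ, inv_pow]
    have hd0 : qNum q (q ^ k * q) ≠ 0 := by rw [← pow_succ]; exact hqintnz k
    exact keyB q t κ hq0 ht hκ hqq (q ^ k) (pow_ne_zero k hq0) (cf q t (t * κ⁻¹) k) hu0 hd0 hs2
  -- RHS transformation
  have hRop : Fb * Fa - (qNum q t / qNum q (t * q)) • (Fa * Fb)
      = ((q⁻¹ - q)⁻¹ * (q⁻¹ - qNum q t / qNum q (t * q))) • G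
        + (-((q⁻¹ - q)⁻¹ * (q - qNum q t / qNum q (t * q)))) • H := by
    rw [hGdef, hHdef]
    have hW : (q⁻¹ - q)⁻¹ * (q⁻¹ - q) = 1 := inv_mul_cancel₀ hqq'
    generalize hr0 : qNum q t / qNum q (t * q) = r0
    generalize hWd : (q⁻¹ - q)⁻¹ = W' at hW ⊢
    match_scalars
    · linear_combination (-1 : ℂ) * hW
    · linear_combination r0 * hW
  have hRapp : ∀ x : V, (Fb * Fa - (qNum q t / qNum q (t * q)) • (Fa * Fb)) x
      = ((q⁻¹ - q)⁻¹ * (q⁻¹ - qNum q t / qNum q (t * q))) • G x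
        + (-((q⁻¹ - q)⁻¹ * (q - qNum q t / qNum q (t * q)))) • H x := by
    intro x
    have h0 := DFunLike.congr_fun hRop x
    simpa only [LinearMap.add_apply, LinearMap.smul_apply] using h0
  have hRHS : (Fb * Fa - (qNum q t / qNum q (t * q)) • (Fa * Fb))
        (∑ k ∈ range (N + 1), cf q (t * q) (t * κ⁻¹) k • (Fa ^ k) ((Ea ^ k) v))
      = ∑ k ∈ range (N + 1),
          ((cf q (t * q) (t * κ⁻¹) k * ((q⁻¹ - q)⁻¹ * (q⁻¹ - qNum q t / qNum q (t * q))))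
              • G ((Fa ^ k) ((Ea ^ k) v))
            + (cf q (t * q) (t * κ⁻¹) k * -((q⁻¹ - q)⁻¹ * (q - qNum q t / qNum q (t * q))))
              • H ((Fa ^ k) ((Ea ^ k) v))) := by
    rw [map_sum]
    apply sum_congr rfl
    intro k _
    rw [map_smul, hRapp, smul_add, smul_smul, smul_smul]
  rw [hRHS]
  -- LHS transformation
  calc ∑ k ∈ range (N + 1), cf q t (t * κ⁻¹) k • (Fa ^ k) ((Ea ^ k) (G v))
      = ∑ k ∈ range (N + 2), cf q t (t * κ⁻¹) k • (Fa ^ k) ((Ea ^ k) (G v)) := by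
        conv_rhs => rw [sum_range_succ]
        rw [hnil', map_zero, smul_zero, add_zero]
    _ = (∑ k ∈ range (N + 1), cf q t (t * κ⁻¹) (k + 1) • (Fa ^ (k + 1)) ((Ea ^ (k + 1)) (G v)))
        + cf q t (t * κ⁻¹) 0 • (Fa ^ 0) ((Ea ^ 0) (G v)) := by
        rw [sum_range_succ']
    _ = (∑ k ∈ range (N + 1),
          ((cf q t (t * κ⁻¹) (k + 1) * q ^ (k + 1)) • G ((Fa ^ (k + 1)) ((Ea ^ (k + 1)) v))
            + ((cf q t (t * κ⁻¹) (k + 1)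
                  * -((∑ j ∈ range (k + 1), (q ^ 2) ^ j) * (q * κ) * ((q⁻¹ - q)⁻¹ * q ^ k)))
                  • G ((Fa ^ k) ((Ea ^ k) v))
              + (cf q t (t * κ⁻¹) (k + 1)
                  * ((∑ j ∈ range (k + 1), (q ^ 2) ^ j) * (q * κ) * ((q⁻¹ - q)⁻¹ * (q⁻¹) ^ k)))
                  • H ((Fa ^ k) ((Ea ^ k) v)))))
        + cf q t (t * κ⁻¹) 0 • G v := by
        congr 1
        apply sum_congr rfl
        intro k _
        rw [hkey2 k, smul_add, smul_add, smul_smul, smul_smul, smul_smul, add_assoc]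
    _ = ((∑ k ∈ range (N + 1),
            (cf q t (t * κ⁻¹) (k + 1) * q ^ (k + 1)) • G ((Fa ^ (k + 1)) ((Ea ^ (k + 1)) v)))
          + cf q t (t * κ⁻¹) 0 • G v)
        + ∑ k ∈ range (N + 1),
            ((cf q t (t * κ⁻¹) (k + 1)
                * -((∑ j ∈ range (k + 1), (q ^ 2) ^ j) * (q * κ) * ((q⁻¹ - q)⁻¹ * q ^ k)))
                • G ((Fa ^ k) ((Ea ^ k) v))
              + (cf q t (t * κ⁻¹) (k + 1)
                * ((∑ j ∈ range (k + 1), (q ^ 2) ^ j) * (q * κ) * ((q⁻¹ - q)⁻¹ * (q⁻¹) ^ k)))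
                • H ((Fa ^ k) ((Ea ^ k) v))) := by
        rw [sum_add_distrib]
        abel
    _ = (∑ k ∈ range (N + 1), (cf q t (t * κ⁻¹) k * q ^ k) • G ((Fa ^ k) ((Ea ^ k) v)))
        + ∑ k ∈ range (N + 1),
            ((cf q t (t * κ⁻¹) (k + 1)
                * -((∑ j ∈ range (k + 1), (q ^ 2) ^ j) * (q * κ) * ((q⁻¹ - q)⁻¹ * q ^ k)))
                • G ((Fa ^ k) ((Ea ^ k) v))
              + (cf q t (t * κ⁻¹) (k + 1)
                * ((∑ j ∈ range (k + 1), (q ^ 2) ^ j) * (q * κ) * ((q⁻¹ - q)⁻¹ * (q⁻¹) ^ k)))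
                • H ((Fa ^ k) ((Ea ^ k) v))) := by
        congr 1
        have h0 : cf q t (t * κ⁻¹) 0 • G v
            = (cf q t (t * κ⁻¹) 0 * q ^ 0) • G ((Fa ^ 0) ((Ea ^ 0) v)) := by
          simp
        rw [h0]
        rw [show (∑ k ∈ range (N + 1),
              (cf q t (t * κ⁻¹) (k + 1) * q ^ (k + 1)) • G ((Fa ^ (k + 1)) ((Ea ^ (k + 1)) v)))
            + (cf q t (t * κ⁻¹) 0 * q ^ 0) • G ((Fa ^ 0) ((Ea ^ 0) v))
            = ∑ k ∈ range (N + 2), (cf q t (t * κ⁻¹) k * q ^ k) • G ((Fa ^ k) ((Ea ^ k) v)) from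
          (sum_range_succ' (fun k => (cf q t (t * κ⁻¹) k * q ^ k) • G ((Fa ^ k) ((Ea ^ k) v)))
            (N + 1)).symm]
        rw [sum_range_succ, hnil, map_zero, map_zero, smul_zero, add_zero]
    _ = ∑ k ∈ range (N + 1),
          ((cf q t (t * κ⁻¹) k * q ^ k) • G ((Fa ^ k) ((Ea ^ k) v))
            + ((cf q t (t * κ⁻¹) (k + 1)
                  * -((∑ j ∈ range (k + 1), (q ^ 2) ^ j) * (q * κ) * ((q⁻¹ - q)⁻¹ * q ^ k)))
                  • G ((Fa ^ k) ((Ea ^ k) v))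
              + (cf q t (t * κ⁻¹) (k + 1)
                  * ((∑ j ∈ range (k + 1), (q ^ 2) ^ j) * (q * κ) * ((q⁻¹ - q)⁻¹ * (q⁻¹) ^ k)))
                  • H ((Fa ^ k) ((Ea ^ k) v)))) := sum_add_distrib.symm
    _ = ∑ k ∈ range (N + 1),
          ((cf q (t * q) (t * κ⁻¹) k * ((q⁻¹ - q)⁻¹ * (q⁻¹ - qNum q t / qNum q (t * q))))
              • G ((Fa ^ k) ((Ea ^ k) v))
            + (cf q (t * q) (t * κ⁻¹) k * -((q⁻¹ - q)⁻¹ * (q - qNum q t / qNum q (t * q))))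
              • H ((Fa ^ k) ((Ea ^ k) v))) := by
        apply sum_congr rfl
        intro k hk
        have hkN : k ≤ N := by simp only [mem_range] at hk; omega
        rw [← add_assoc, ← add_smul, sA k hkN, sB k hkN]
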